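/- Let g be a finite dimensional Lie algebra over F (char 0) and let R be an R-matrix over g. Let f,g ∈ S(g) be Casimirs of g, i.e. ∑_i (∂f/∂u_i)[x,u_i] = 0 for all x ∈ g (and similarly for g). Then for every ε ∈ F, {f,g}^{R,ε} = 0, where {·,·}^{R,ε} is the Oevel–Ragnisco ε-family of brackets defined on generators a,b ∈ g by {a,b}^{R,ε} = (1/2)∑_{i,j}(u^i + εTr(u^i))(u^j + εTr(u^j))([a,R(u_i b u_j)] − [b,R(u_i a u_j)]) and extended by the Leibniz rules. -/

import Mathlib

lemma deriv_expand {F : Type*} [Field F] {ι : Type*} [Fintype ι] [DecidableEq ι]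
    (D : MvPolynomial ι F →ₗ[F] MvPolynomial ι F)
    (hD : ∀ p q, D (p * q) = D p * q + p * D q)
    (f : MvPolynomial ι F) :
    D f = ∑ i, MvPolynomial.pderiv i f * D (MvPolynomial.X i) := by
  have h1 : D 1 = 0 := by
    have := hD 1 1
    simp only [mul_one, one_mul] at this
    exact left_eq_add.mp this
  induction f using MvPolynomial.induction_on with
  | C a =>
      have hc : D (MvPolynomial.C a) = 0 := by
        have : (MvPolynomial.C a : MvPolynomial ι F) = a • 1 := by
          simp [MvPolynomial.smul_eq_C_mul]
        rw [this, map_smul, h1, smul_zero]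
      simp [hc]
  | add p q hp hq =>
      simp [map_add, hp, hq, add_mul, Finset.sum_add_distrib]
  | mul_X p i hp =>
      rw [hD, hp, Finset.sum_mul]
      have hder : ∀ j, MvPolynomial.pderiv j (p * MvPolynomial.X i) =
          MvPolynomial.pderiv j p * MvPolynomial.X i +
            p * Pi.single (M := fun _ : ι => MvPolynomial ι F) j 1 i := by
        intro j; simp [MvPolynomial.pderiv_mul, MvPolynomial.pderiv_X]; ring
      simp only [hder, add_mul, Finset.sum_add_distrib]
      congr 1
      · exact Finset.sum_congr rfl fun j _ => by ring
      · rw [Finset.sum_eq_single i]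
        · simp
        · intro j _ hj; simp [Pi.single_apply, hj]
        · simp

lemma sum_rotate3 {M ι : Type*} [AddCommMonoid M] [Fintype ι] (G : ι → ι → ι → M) :
    ∑ j, ∑ k, ∑ l, G j k l = ∑ k, ∑ l, ∑ j, G j k l := by
  rw [Finset.sum_comm]
  exact Finset.sum_congr rfl fun k _ => Finset.sum_comm

lemma sum_rotate4 {M ι : Type*} [AddCommMonoid M] [Fintype ι] (G : ι → ι → ι → ι → M) :
    ∑ i, ∑ j, ∑ k, ∑ l, G i j k l = ∑ j, ∑ k, ∑ l, ∑ i, G i j k l := by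
  rw [Finset.sum_comm]
  exact Finset.sum_congr rfl fun j _ => sum_rotate3 _



/-- Casimirs Poisson commute with respect to the whole Oevel–Ragnisco `ε`-family of
brackets: if `f₁, f₂` in the symmetric algebra (realized as `MvPolynomial ι F`) are
Casimirs, i.e. `∑_i (∂f/∂u_i) [x, u_i] = 0` for all `x`, then `{f₁, f₂}^{R,ε} = 0`,
where the `ε`-bracket is defined on generators by
`{a,c}^{R,ε} = (1/2) ∑_{i,j} (u^i + ε Tr u^i)(u^j + ε Tr u^j)
  ([a, R(u_i c u_j)] - [c, R(u_i a u_j)])` and extended by the Leibniz rules. -/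
theorem stmt_13 {F : Type*} [Field F] [CharZero F]
    {g : Type*} [Ring g] [Algebra F g] [FiniteDimensional F g]
    {ι : Type*} [Fintype ι] [DecidableEq ι]
    (b : Module.Basis ι F g) (v : ι → g)
    (Tr : g →ₗ[F] F)
    (hTrc : ∀ p q : g, Tr (p * q - q * p) = 0)
    (hTrnd : ∀ p : g, (∀ q : g, Tr (p * q) = 0) → p = 0)
    (hdual : ∀ i j, Tr (b i * v j) = if i = j then (1 : F) else 0)
    (R : g →ₗ[F] g)
    (hR : ∀ p q : g, (R p * R q - R q * R p) - R (R p * q - q * R p)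
          - R (p * R q - R q * p) + (p * q - q * p) = 0)
    (ε : F)
    (ℓ : g →ₗ[F] MvPolynomial ι F)
    (hℓ : ∀ i, ℓ (b i) = MvPolynomial.X i)
    (B : MvPolynomial ι F →ₗ[F] MvPolynomial ι F →ₗ[F] MvPolynomial ι F)
    (hLeib1 : ∀ f p q, B f (p * q) = B f p * q + p * B f q)
    (hLeib2 : ∀ f p q, B (f * p) q = B f q * p + f * B p q)
    (hgen : ∀ a c : g, B (ℓ a) (ℓ c) = (1 / 2 : F) •
      ∑ i, ∑ j,
        (ℓ (v i) + MvPolynomial.C (ε * Tr (v i))) *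
        (ℓ (v j) + MvPolynomial.C (ε * Tr (v j))) *
        ℓ ((a * R (b i * c * b j) - R (b i * c * b j) * a)
            - (c * R (b i * a * b j) - R (b i * a * b j) * c)))
    (f₁ f₂ : MvPolynomial ι F)
    (hf₁ : ∀ x : g, ∑ i, MvPolynomial.pderiv i f₁ * ℓ (x * b i - b i * x) = 0)
    (hf₂ : ∀ x : g, ∑ i, MvPolynomial.pderiv i f₂ * ℓ (x * b i - b i * x) = 0) :
    B f₁ f₂ = 0 := by
  classical
  set P : ι → MvPolynomial ι F := fun i => MvPolynomial.pderiv i f₁ with hP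
  set Q : ι → MvPolynomial ι F := fun j => MvPolynomial.pderiv j f₂ with hQ
  set W : ι → MvPolynomial ι F :=
    fun k => ℓ (v k) + MvPolynomial.C (ε * Tr (v k)) with hW
  -- reversed-commutator forms of the Casimir conditions
  have hc₁ : ∀ x : g, ∑ i, P i * ℓ (b i * x - x * b i) = 0 := by
    intro x
    have hsum : (∑ i, P i * ℓ (b i * x - x * b i)) +
        (∑ i, P i * ℓ (x * b i - b i * x)) = 0 := by
      rw [← Finset.sum_add_distrib]
      refine Finset.sum_eq_zero fun i _ => ?_
      rw [← mul_add, ← map_add,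
        show (b i * x - x * b i) + (x * b i - b i * x) = 0 by abel, map_zero, mul_zero]
    have h := hf₁ x
    linear_combination hsum - h
  have hc₂ : ∀ x : g, ∑ j, Q j * ℓ (b j * x - x * b j) = 0 := by
    intro x
    have hsum : (∑ j, Q j * ℓ (b j * x - x * b j)) +
        (∑ j, Q j * ℓ (x * b j - b j * x)) = 0 := by
      rw [← Finset.sum_add_distrib]
      refine Finset.sum_eq_zero fun j _ => ?_
      rw [← mul_add, ← map_add,
        show (b j * x - x * b j) + (x * b j - b j * x) = 0 by abel, map_zero, mul_zero]
    have h := hf₂ x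
    linear_combination hsum - h
  -- expand B via the Leibniz rules
  have e1 := deriv_expand (B.flip f₂) (fun p q => hLeib2 p q f₂) f₁
  simp only [LinearMap.flip_apply] at e1
  have e2 : ∀ i : ι, B (MvPolynomial.X i) f₂ =
      ∑ j, Q j * B (MvPolynomial.X i) (MvPolynomial.X j) :=
    fun i => deriv_expand (B (MvPolynomial.X i)) (hLeib1 _) f₂
  have e3 : ∀ i j : ι, B (MvPolynomial.X i) (MvPolynomial.X j) = (1 / 2 : F) •
      ∑ k, ∑ l, W k * W l *
        (ℓ (b i * R (b k * b j * b l) - R (b k * b j * b l) * b i)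
         - ℓ (b j * R (b k * b i * b l) - R (b k * b i * b l) * b j)) := by
    intro i j
    rw [← hℓ i, ← hℓ j, hgen]
    congr 1
    refine Finset.sum_congr rfl fun k _ => Finset.sum_congr rfl fun l _ => ?_
    rw [map_sub]
  have expand : B f₁ f₂ =
      (∑ i, ∑ j, ∑ k, ∑ l,
        MvPolynomial.C (1 / 2 : F) * (W k * W l) * (P i * Q j *
          ℓ (b i * R (b k * b j * b l) - R (b k * b j * b l) * b i)))
      - (∑ i, ∑ j, ∑ k, ∑ l,
        MvPolynomial.C (1 / 2 : F) * (W k * W l) * (P i * Q j *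
          ℓ (b j * R (b k * b i * b l) - R (b k * b i * b l) * b j))) := by
    rw [e1, ← Finset.sum_sub_distrib]
    refine Finset.sum_congr rfl fun i _ => ?_
    rw [e2 i, Finset.mul_sum, ← Finset.sum_sub_distrib]
    refine Finset.sum_congr rfl fun j _ => ?_
    rw [e3 i j, MvPolynomial.smul_eq_C_mul]
    simp only [Finset.mul_sum]
    rw [← Finset.sum_sub_distrib]
    refine Finset.sum_congr rfl fun k _ => ?_
    rw [← Finset.sum_sub_distrib]
    refine Finset.sum_congr rfl fun l _ => ?_
    ring
  rw [expand]
  have part1 : (∑ i, ∑ j, ∑ k, ∑ l,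
      MvPolynomial.C (1 / 2 : F) * (W k * W l) * (P i * Q j *
        ℓ (b i * R (b k * b j * b l) - R (b k * b j * b l) * b i))) = 0 := by
    rw [sum_rotate4]
    refine Finset.sum_eq_zero fun j _ => Finset.sum_eq_zero fun k _ =>
      Finset.sum_eq_zero fun l _ => ?_
    calc (∑ i, MvPolynomial.C (1 / 2 : F) * (W k * W l) * (P i * Q j *
            ℓ (b i * R (b k * b j * b l) - R (b k * b j * b l) * b i)))
        = (∑ i, P i * ℓ (b i * R (b k * b j * b l) - R (b k * b j * b l) * b i)) *
            (MvPolynomial.C (1 / 2 : F) * (W k * W l) * Q j) := by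
          rw [Finset.sum_mul]
          exact Finset.sum_congr rfl fun i _ => by ring
      _ = 0 := by rw [hc₁, zero_mul]
  have part2 : (∑ i, ∑ j, ∑ k, ∑ l,
      MvPolynomial.C (1 / 2 : F) * (W k * W l) * (P i * Q j *
        ℓ (b j * R (b k * b i * b l) - R (b k * b i * b l) * b j))) = 0 := by
    refine Finset.sum_eq_zero fun i _ => ?_
    rw [sum_rotate3]
    refine Finset.sum_eq_zero fun k _ => Finset.sum_eq_zero fun l _ => ?_
    calc (∑ j, MvPolynomial.C (1 / 2 : F) * (W k * W l) * (P i * Q j *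
            ℓ (b j * R (b k * b i * b l) - R (b k * b i * b l) * b j)))
        = (∑ j, Q j * ℓ (b j * R (b k * b i * b l) - R (b k * b i * b l) * b j)) *
            (MvPolynomial.C (1 / 2 : F) * (W k * W l) * P i) := by
          rw [Finset.sum_mul]
          exact Finset.sum_congr rfl fun j _ => by ring
      _ = 0 := by rw [hc₂, zero_mul]
  rw [part1, part2, sub_zero]
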